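/- arXiv:1504.06226 — 4 statements merged into one kernel-verified Lean document; each statement's English description precedes it below -/
import Mathlib

section
/- Let 𝒳 be a finite set, f : 𝒳 → ℝ^p, and for a probability measure ξ on 𝒳 let M(ξ) = Σ_x f(x) f(x)ᵀ ξ(x). Let Ξ⁺ be the set of probability measures μ with M(μ) nonsingular. Then for every ξ ∈ Ξ⁺, det(M(ξ))^(1/p) = min over μ ∈ Ξ⁺ of Σ_x [det(M(μ))^(1/p)/p · f(x)ᵀ M(μ)⁻¹ f(x)] ξ(x), the minimum attained at μ = ξ. -/
open Matrix

/-- The information matrix of a design `ξ` on a finite design space. -/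
def infoM {X : Type*} [Fintype X] {p : ℕ} (f : X → (Fin p → ℝ)) (ξ : X → ℝ) :
    Matrix (Fin p) (Fin p) ℝ :=
  ∑ x, ξ x • vecMulVec (f x) (f x)

section Aux

variable {p : ℕ}

lemma aux_psd_vecMulVec (v : Fin p → ℝ) : (vecMulVec v v).PosSemidef := by
  refine Matrix.PosSemidef.of_dotProduct_mulVec_nonneg ?_ ?_
  · ext i j
    simp [Matrix.IsHermitian, conjTranspose_apply, vecMulVec_apply, mul_comm]
  · intro x
    have h : dotProduct (star x) (vecMulVec v v *ᵥ x) = (v ⬝ᵥ x) * (v ⬝ᵥ x) := by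
      simp only [star_trivial, dotProduct, mulVec, vecMulVec_apply, Finset.mul_sum,
        Finset.sum_mul]
      rw [Finset.sum_comm]
      apply Finset.sum_congr rfl; intro i _
      apply Finset.sum_congr rfl; intro j _
      ring
    rw [h]
    exact mul_self_nonneg _

lemma aux_infoM_psd {X : Type*} [Fintype X] (f : X → (Fin p → ℝ)) (ν : X → ℝ)
    (hν : ∀ x, 0 ≤ ν x) : (infoM f ν).PosSemidef := by
  unfold infoM
  refine Finset.sum_induction _ Matrix.PosSemidef (fun a b ha hb => ha.add hb)
    Matrix.PosSemidef.zero ?_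
  intro x _
  have h : ν x • vecMulVec (f x) (f x)
      = vecMulVec (Real.sqrt (ν x) • f x) (Real.sqrt (ν x) • f x) := by
    ext i j
    simp only [Matrix.smul_apply, vecMulVec_apply, Pi.smul_apply, smul_eq_mul]
    rw [mul_mul_mul_comm, Real.mul_self_sqrt (hν x)]
  rw [h]
  exact aux_psd_vecMulVec _

lemma aux_trace_mul_vecMulVec (W : Matrix (Fin p) (Fin p) ℝ) (v : Fin p → ℝ) :
    (W * vecMulVec v v).trace = v ⬝ᵥ W *ᵥ v := by
  simp only [Matrix.trace, Matrix.diag, Matrix.mul_apply, vecMulVec_apply, dotProduct,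
    mulVec, Finset.mul_sum]
  apply Finset.sum_congr rfl; intro i _
  apply Finset.sum_congr rfl; intro j _
  ring

lemma aux_trace_mul_infoM {X : Type*} [Fintype X] (f : X → (Fin p → ℝ)) (ν : X → ℝ)
    (W : Matrix (Fin p) (Fin p) ℝ) :
    (W * infoM f ν).trace = ∑ x, ν x * (f x ⬝ᵥ W *ᵥ f x) := by
  unfold infoM
  rw [Finset.mul_sum, Matrix.trace_sum]
  apply Finset.sum_congr rfl; intro x _
  rw [Matrix.mul_smul, Matrix.trace_smul, aux_trace_mul_vecMulVec, smul_eq_mul]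

lemma aux_trace_eq_sum_eigenvalues {A : Matrix (Fin p) (Fin p) ℝ} (hA : A.IsHermitian) :
    A.trace = ∑ i, hA.eigenvalues i := by
  conv_lhs => rw [hA.spectral_theorem]
  rw [Unitary.conjStarAlgAut_apply]
  rw [Matrix.trace_mul_comm, ← mul_assoc]
  have h : (star (hA.eigenvectorUnitary : Matrix (Fin p) (Fin p) ℝ)) *
      (hA.eigenvectorUnitary : Matrix (Fin p) (Fin p) ℝ) = 1 :=
    (hA.eigenvectorUnitary).prop.1
  rw [h, one_mul, Matrix.trace_diagonal]
  simp

lemma aux_det_nonneg {A : Matrix (Fin p) (Fin p) ℝ} (hA : A.PosSemidef) : 0 ≤ A.det := by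
  rw [hA.1.det_eq_prod_eigenvalues]
  exact Finset.prod_nonneg fun i _ => by simpa using hA.eigenvalues_nonneg i

/-- AM-GM for PSD matrices: `det C ^ (1/p) ≤ trace C / p`. -/
lemma aux_amgm {C : Matrix (Fin p) (Fin p) ℝ} (hp : 0 < p) (hC : C.PosSemidef) :
    C.det ^ ((1 : ℝ) / p) ≤ C.trace / p := by
  have hlam : ∀ i ∈ Finset.univ, (0 : ℝ) ≤ hC.1.eigenvalues i :=
    fun i _ => hC.eigenvalues_nonneg i
  have hdet : C.det = ∏ i, hC.1.eigenvalues i := by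
    rw [hC.1.det_eq_prod_eigenvalues]; norm_num
  have htr : C.trace = ∑ i, hC.1.eigenvalues i := aux_trace_eq_sum_eigenvalues hC.1
  rw [hdet, htr, ← Real.finset_prod_rpow _ _ hlam]
  have hw : ∑ _i : Fin p, (1 : ℝ) / p = 1 := by
    rw [Finset.sum_const, Finset.card_univ, Fintype.card_fin, nsmul_eq_mul]
    field_simp
  calc ∏ i, hC.1.eigenvalues i ^ ((1 : ℝ) / p)
      ≤ ∑ i, ((1 : ℝ) / p) * hC.1.eigenvalues i :=
        Real.geom_mean_le_arith_mean_weighted _ _ _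
          (fun i _ => by positivity) hw hlam
    _ = (∑ i, hC.1.eigenvalues i) / p := by
        rw [← Finset.mul_sum]; ring

open scoped MatrixOrder

/-- Key inequality: for PSD `A`, `B` with `A` invertible,
`det B ^ (1/p) ≤ det A ^ (1/p) / p * trace (A⁻¹ * B)`. -/
lemma aux_key {A B : Matrix (Fin p) (Fin p) ℝ} (hp : 0 < p)
    (hA : A.PosSemidef) (hB : B.PosSemidef) (hAdet : IsUnit A.det) :
    B.det ^ ((1 : ℝ) / p) ≤ A.det ^ ((1 : ℝ) / p) / p * (A⁻¹ * B).trace := by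
  set S := CFC.sqrt A with hSdef
  have hS : S.PosSemidef := (CFC.sqrt_nonneg A).posSemidef
  have hSS : S * S = A := CFC.sqrt_mul_sqrt_self A hA.nonneg
  have hdetS : S.det * S.det = A.det := by rw [← Matrix.det_mul, hSS]
  have hAdetpos : 0 < A.det :=
    lt_of_le_of_ne (aux_det_nonneg hA) (Ne.symm hAdet.ne_zero)
  have hSdet : IsUnit S.det := by
    refine isUnit_iff_ne_zero.mpr fun h => ?_
    rw [h, mul_zero] at hdetS
    exact hAdetpos.ne' hdetS.symm
  set C := S⁻¹ * B * S⁻¹ with hCdef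
  have hSinvH : (S⁻¹)ᴴ = S⁻¹ := hS.1.inv
  have hC : C.PosSemidef := by
    have := hB.mul_mul_conjTranspose_same S⁻¹
    rwa [hSinvH] at this
  have hdetC : C.det = B.det / A.det := by
    rw [hCdef, Matrix.det_mul, Matrix.det_mul, Matrix.det_nonsing_inv,
      Ring.inverse_eq_inv', ← hdetS]
    field_simp [hSdet.ne_zero]
  have htrC : C.trace = (A⁻¹ * B).trace := by
    rw [hCdef, Matrix.trace_mul_comm, ← mul_assoc, ← Matrix.mul_inv_rev, hSS]
  have hineq := aux_amgm hp hC
  rw [hdetC, htrC] at hineq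
  have hBdet : 0 ≤ B.det := aux_det_nonneg hB
  have hsplit : (B.det / A.det) ^ ((1 : ℝ) / p)
      = B.det ^ ((1 : ℝ) / p) / A.det ^ ((1 : ℝ) / p) := by
    rw [Real.div_rpow hBdet hAdetpos.le]
  rw [hsplit] at hineq
  have hApow : 0 < A.det ^ ((1 : ℝ) / p) := Real.rpow_pos_of_pos hAdetpos _
  have h2 := (div_le_iff₀ hApow).mp hineq
  calc B.det ^ ((1 : ℝ) / p) ≤ (A⁻¹ * B).trace / p * A.det ^ ((1 : ℝ) / p) := h2
    _ = A.det ^ ((1 : ℝ) / p) / p * (A⁻¹ * B).trace := by ring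

end Aux

/-- Minimax representation of the homogeneous D-optimality criterion:
`det(M(ξ))^(1/p) = min_{μ∈Ξ⁺} Σ_x [det(M(μ))^(1/p)/p · f(x)ᵀM(μ)⁻¹f(x)] ξ(x)`,
the minimum being attained at `μ = ξ`. -/
theorem stmt_6 {X : Type*} [Fintype X] (p : ℕ) (hp : 0 < p) (f : X → (Fin p → ℝ))
    (ξ : X → ℝ) (hξ0 : ∀ x, 0 ≤ ξ x) (hξ1 : ∑ x, ξ x = 1)
    (hξinv : IsUnit (infoM f ξ).det) :
    (∑ x, ((infoM f ξ).det ^ ((1 : ℝ) / p) / p *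
        (f x ⬝ᵥ (infoM f ξ)⁻¹.mulVec (f x))) * ξ x
      = (infoM f ξ).det ^ ((1 : ℝ) / p)) ∧
    (∀ μ : X → ℝ, (∀ x, 0 ≤ μ x) → (∑ x, μ x = 1) → IsUnit (infoM f μ).det →
      (infoM f ξ).det ^ ((1 : ℝ) / p) ≤
        ∑ x, ((infoM f μ).det ^ ((1 : ℝ) / p) / p *
          (f x ⬝ᵥ (infoM f μ)⁻¹.mulVec (f x))) * ξ x) := by
  have hsum : ∀ (W : Matrix (Fin p) (Fin p) ℝ) (c : ℝ),
      ∑ x, (c * (f x ⬝ᵥ W.mulVec (f x))) * ξ x = c * (W * infoM f ξ).trace := by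
    intro W c
    rw [aux_trace_mul_infoM f ξ W, Finset.mul_sum]
    apply Finset.sum_congr rfl; intro x _
    ring
  constructor
  · rw [hsum, Matrix.nonsing_inv_mul _ hξinv, Matrix.trace_one]
    field_simp
    rw [Fintype.card_fin]; ring
  · intro μ hμ0 hμ1 hμinv
    rw [hsum]
    exact aux_key hp (aux_infoM_psd f μ hμ0) (aux_infoM_psd f ξ hξ0) hμinv
end

section
/- Let 𝒳 be а finite set, f : 𝒳 → ℝ^p, M(ξ) = Σ_x f(x)f(x)ᵀ ξ(x), and Ξ⁺ the set of probability measures ξ on 𝒳 with M(ξ) nonsingular. Then for every ξ ∈ Ξ⁺, 1/tr(M(ξ)⁻¹) = min over μ ∈ Ξ⁺ of Σ_x [‖M(μ)⁻¹ f(x)‖² / (tr M(μ)⁻¹)²] ξ(x), with the minimum attained at μ = ξ. -/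
open Matrix

namespace AOptAux

variable {X : Type*} [Fintype X] {p : ℕ}

lemma conj_vecMulVec {v : Fin p → ℝ} (B : Matrix (Fin p) (Fin p) ℝ) :
    B * vecMulVec v v * Bᵀ = vecMulVec (B *ᵥ v) (B *ᵥ v) := by
  ext i j
  simp only [mul_apply, vecMulVec_apply, mulVec, dotProduct, transpose_apply,
    Finset.sum_mul, Finset.mul_sum]
  congr 1; ext k; congr 1; ext l; ring

lemma trace_vecMulVec (w : Fin p → ℝ) : (vecMulVec w w).trace = w ⬝ᵥ w := by
  simp [trace, vecMulVec_apply, dotProduct, Matrix.diag]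

lemma trace_conj (f : X → (Fin p → ℝ)) (ξ : X → ℝ) (B : Matrix (Fin p) (Fin p) ℝ) :
    (B * infoM f ξ * Bᵀ).trace = ∑ x, ξ x * ((B *ᵥ f x) ⬝ᵥ (B *ᵥ f x)) := by
  simp only [infoM, Finset.mul_sum, Finset.sum_mul, Matrix.mul_smul, Matrix.smul_mul,
    trace_sum, trace_smul, conj_vecMulVec, trace_vecMulVec, smul_eq_mul]

lemma infoM_mulVec (f : X → (Fin p → ℝ)) (ξ : X → ℝ) (y : Fin p → ℝ) :
    (infoM f ξ) *ᵥ y = ∑ x, (ξ x * (f x ⬝ᵥ y)) • f x := by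
  ext i
  simp only [infoM, mulVec, dotProduct, Finset.sum_apply, Matrix.sum_apply, Pi.smul_apply, smul_eq_mul,
    Matrix.smul_apply, vecMulVec_apply, Finset.sum_mul, Finset.mul_sum]
  rw [Finset.sum_comm]
  refine Finset.sum_congr rfl fun x _ => Finset.sum_congr rfl fun j _ => by ring

lemma dot_sum (y : Fin p → ℝ) (g : X → Fin p → ℝ) :
    y ⬝ᵥ (∑ x, g x) = ∑ x, y ⬝ᵥ g x := by
  simp only [dotProduct, Finset.sum_apply, Finset.mul_sum]
  exact Finset.sum_comm

lemma quad_form (f : X → (Fin p → ℝ)) (ξ : X → ℝ) (y : Fin p → ℝ) :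
    y ⬝ᵥ ((infoM f ξ) *ᵥ y) = ∑ x, ξ x * (f x ⬝ᵥ y) ^ 2 := by
  rw [infoM_mulVec, dot_sum]
  refine Finset.sum_congr rfl fun x _ => ?_
  rw [dotProduct_smul, smul_eq_mul]
  rw [show f x ⬝ᵥ y = y ⬝ᵥ f x from dotProduct_comm _ _]
  ring

lemma infoM_herm (f : X → (Fin p → ℝ)) (ξ : X → ℝ) : (infoM f ξ).IsHermitian := by
  ext i j
  simp only [infoM, conjTranspose_apply, Finset.sum_apply, Matrix.sum_apply, Matrix.smul_apply,
    vecMulVec_apply, star_sum, star_mul', star_trivial, smul_eq_mul]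
  refine Finset.sum_congr rfl fun x _ => by ring

lemma infoM_posSemidef (f : X → (Fin p → ℝ)) {ξ : X → ℝ} (hξ0 : ∀ x, 0 ≤ ξ x) :
    (infoM f ξ).PosSemidef := by
  refine .of_dotProduct_mulVec_nonneg (infoM_herm f ξ) fun y => ?_
  rw [show star y = y from rfl, quad_form]
  exact Finset.sum_nonneg fun x _ => mul_nonneg (hξ0 x) (sq_nonneg _)

lemma infoM_posDef (f : X → (Fin p → ℝ)) {ξ : X → ℝ} (hξ0 : ∀ x, 0 ≤ ξ x)
    (hdet : IsUnit (infoM f ξ).det) : (infoM f ξ).PosDef := by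
  refine .of_dotProduct_mulVec_pos (infoM_herm f ξ) fun y hy => ?_
  rw [show star y = y from rfl]
  rcases lt_or_eq_of_le ((infoM_posSemidef f hξ0).dotProduct_mulVec_nonneg y) with h | h
  · exact h
  exfalso
  have hzero : ∀ x, ξ x * (f x ⬝ᵥ y) = 0 := by
    intro x
    have h' : ∑ x, ξ x * (f x ⬝ᵥ y) ^ 2 = 0 := by rw [← quad_form]; exact h.symm
    have hx := (Finset.sum_eq_zero_iff_of_nonneg
      (fun x _ => mul_nonneg (hξ0 x) (sq_nonneg _))).mp h' x (Finset.mem_univ x)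
    rcases mul_eq_zero.mp hx with h1 | h1
    · rw [h1, zero_mul]
    · rw [pow_eq_zero_iff (by norm_num)] at h1
      rw [h1, mul_zero]
  have hMy : (infoM f ξ) *ᵥ y = 0 := by
    rw [infoM_mulVec]
    refine Finset.sum_eq_zero fun x _ => ?_
    rw [hzero x, zero_smul]
  exact hy (Matrix.eq_zero_of_mulVec_eq_zero (hdet.ne_zero ∘ fun h => h ▸ rfl) hMy)

lemma psd_trace_nonneg {A : Matrix (Fin p) (Fin p) ℝ} (hA : A.PosSemidef) :
    0 ≤ A.trace := by
  refine Finset.sum_nonneg fun i _ => ?_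
  have := hA.dotProduct_mulVec_nonneg (Pi.single i 1)
  simpa [single_dotProduct, mulVec_single, Matrix.diag] using this

lemma posdef_trace_pos (hp : 0 < p) {A : Matrix (Fin p) (Fin p) ℝ} (hA : A.PosDef) :
    0 < A.trace := by
  have i : Fin p := ⟨0, hp⟩
  have h1 : ∀ j : Fin p, 0 ≤ A j j := fun j => by
    have := hA.posSemidef.dotProduct_mulVec_nonneg (Pi.single j 1)
    simpa [single_dotProduct, mulVec_single] using this
  have h2 : 0 < A i i := by
    have hne : (Pi.single i 1 : Fin p → ℝ) ≠ 0 := by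
      intro h
      have := congrFun h i
      simp at this
    have := hA.dotProduct_mulVec_pos hne
    simpa [single_dotProduct, mulVec_single] using this
  calc 0 < A i i := h2
    _ ≤ A.trace := Finset.single_le_sum (fun j _ => h1 j) (Finset.mem_univ i)

end AOptAux

open AOptAux in
/-- Minimax representation of the homogeneous A-optimality criterion:
`1/tr(M(ξ)⁻¹) = min_{μ∈Ξ⁺} Σ_x [‖M(μ)⁻¹f(x)‖²/(tr M(μ)⁻¹)²] ξ(x)`,
the minimum being attained at `μ = ξ`. -/
theorem stmt_7 {X : Type*} [Fintype X] (p : ℕ) (hp : 0 < p) (f : X → (Fin p → ℝ))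
    (ξ : X → ℝ) (hξ0 : ∀ x, 0 ≤ ξ x) (hξ1 : ∑ x, ξ x = 1)
    (hξinv : IsUnit (infoM f ξ).det) :
    (∑ x, ((infoM f ξ)⁻¹.mulVec (f x) ⬝ᵥ (infoM f ξ)⁻¹.mulVec (f x) /
        ((infoM f ξ)⁻¹.trace) ^ 2) * ξ x
      = 1 / (infoM f ξ)⁻¹.trace) ∧
    (∀ μ : X → ℝ, (∀ x, 0 ≤ μ x) → (∑ x, μ x = 1) → IsUnit (infoM f μ).det →
      1 / (infoM f ξ)⁻¹.trace ≤
        ∑ x, ((infoM f μ)⁻¹.mulVec (f x) ⬝ᵥ (infoM f μ)⁻¹.mulVec (f x) /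
          ((infoM f μ)⁻¹.trace) ^ 2) * ξ x) := by
  set N := infoM f ξ with hN
  have hNpd : N.PosDef := infoM_posDef f hξ0 hξinv
  have hNinvpd : N⁻¹.PosDef := hNpd.inv
  have htN : 0 < N⁻¹.trace := posdef_trace_pos hp hNinvpd
  have hNinvT : N⁻¹ᵀ = N⁻¹ := by
    rw [transpose_nonsing_inv]
    congr 1
    have := (infoM_herm f ξ).eq
    simpa using this
  -- main identity: for any symmetric-conjugation, the weighted sum is a trace
  have key : ∀ (μ : X → ℝ), (∑ x, ξ x * (((infoM f μ)⁻¹ *ᵥ f x) ⬝ᵥ ((infoM f μ)⁻¹ *ᵥ f x)))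
      = ((infoM f μ)⁻¹ * N * (infoM f μ)⁻¹ᵀ).trace := fun μ => (trace_conj f ξ _).symm
  constructor
  · have h1 : (∑ x, ξ x * ((N⁻¹ *ᵥ f x) ⬝ᵥ (N⁻¹ *ᵥ f x))) = N⁻¹.trace := by
      rw [key ξ, ← hN, hNinvT]
      have : N⁻¹ * N * N⁻¹ = N⁻¹ := by
        rw [Matrix.nonsing_inv_mul N hξinv, Matrix.one_mul]
      rw [this]
    calc ∑ x, ((N⁻¹ *ᵥ f x) ⬝ᵥ (N⁻¹ *ᵥ f x) / N⁻¹.trace ^ 2) * ξ x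
        = (∑ x, ξ x * ((N⁻¹ *ᵥ f x) ⬝ᵥ (N⁻¹ *ᵥ f x))) / N⁻¹.trace ^ 2 := by
          rw [Finset.sum_div]; congr 1; ext x; ring
      _ = N⁻¹.trace / N⁻¹.trace ^ 2 := by rw [h1]
      _ = 1 / N⁻¹.trace := by rw [sq, ← div_div, div_self htN.ne', one_div]
  · intro μ hμ0 hμ1 hμinv
    set A := (infoM f μ)⁻¹ with hA
    have hMpd : (infoM f μ).PosDef := infoM_posDef f hμ0 hμinv
    have hApd : A.PosDef := hMpd.inv
    have htA : 0 < A.trace := posdef_trace_pos hp hApd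
    have hAT : Aᵀ = A := by
      rw [hA, transpose_nonsing_inv]
      congr 1
      have := (infoM_herm f μ).eq
      simpa using this
    have hsum : (∑ x, ξ x * ((A *ᵥ f x) ⬝ᵥ (A *ᵥ f x))) = (A * N * A).trace := by
      rw [key μ, ← hA, hAT]
    -- Cauchy-Schwarz: (tr A)^2 ≤ tr(N⁻¹) * tr(A N A)
    set t : ℝ := A.trace / N⁻¹.trace with ht
    set C : Matrix (Fin p) (Fin p) ℝ := A - t • N⁻¹ with hC
    have hCT : Cᵀ = C := by rw [hC, transpose_sub, transpose_smul, hAT, hNinvT]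
    have hpsd : (Cᵀ * N * C).PosSemidef := by
      have := (infoM_posSemidef f hξ0).conjTranspose_mul_mul_same C
      simpa [← hN, conjTranspose_eq_transpose_of_trivial] using this
    have htr : 0 ≤ (Cᵀ * N * C).trace := psd_trace_nonneg hpsd
    have hexp : (Cᵀ * N * C).trace
        = (A * N * A).trace - 2 * t * A.trace + t ^ 2 * N⁻¹.trace := by
      rw [hCT, hC]
      have hNA : N * A = (N * A) := rfl
      have e1 : (A - t • N⁻¹) * N * (A - t • N⁻¹)
          = A * N * A - t • (A * N * N⁻¹) - t • (N⁻¹ * N * A)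
            + (t * t) • (N⁻¹ * N * N⁻¹) := by
        simp only [Matrix.sub_mul, Matrix.mul_sub, Matrix.smul_mul, Matrix.mul_smul,
          smul_smul]
        module
      rw [e1]
      have e2 : A * N * N⁻¹ = A := by
        rw [Matrix.mul_assoc, Matrix.mul_nonsing_inv N hξinv, Matrix.mul_one]
      have e3 : N⁻¹ * N * A = A := by
        rw [Matrix.nonsing_inv_mul N hξinv, Matrix.one_mul]
      have e4 : N⁻¹ * N * N⁻¹ = N⁻¹ := by
        rw [Matrix.nonsing_inv_mul N hξinv, Matrix.one_mul]
      rw [e2, e3, e4]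
      simp only [trace_add, trace_sub, trace_smul, smul_eq_mul]
      ring
    have hCS : A.trace ^ 2 ≤ N⁻¹.trace * (A * N * A).trace := by
      have h0 : 0 ≤ (A * N * A).trace - 2 * t * A.trace + t ^ 2 * N⁻¹.trace := hexp ▸ htr
      have hts : t * N⁻¹.trace = A.trace := by
        rw [ht, div_mul_cancel₀ _ htN.ne']
      nlinarith [h0, htN, sq_nonneg t]
    -- conclude
    have hgoal : ∑ x, ((A *ᵥ f x) ⬝ᵥ (A *ᵥ f x) / A.trace ^ 2) * ξ x
        = (A * N * A).trace / A.trace ^ 2 := by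
      rw [← hsum, Finset.sum_div]; congr 1; ext x; ring
    rw [hgoal]
    rw [div_le_div_iff₀ htN (by positivity)]
    calc 1 * A.trace ^ 2 = A.trace ^ 2 := one_mul _
      _ ≤ N⁻¹.trace * (A * N * A).trace := hCS
      _ = (A * N * A).trace * N⁻¹.trace := mul_comm _ _
end

section
/- Let 𝒳 be a finite set, f : 𝒳 → ℝ^p, M(ξ) = Σ_x f(x)f(x)ᵀ ξ(x), and for μ a probability measure on 𝒳 let P^(k)(μ) be the orthogonal projector onto the span of k orthonormal eigenvectors of M(μ) corresponding to its k smallest eigenvalues. Then for every probability measure ξ, the sum of the k smallest eigenvalues of M(ξ) equals min over all probability measures μ of Σ_x ‖P^(k)(μ) f(x)‖² ξ(x), with the minimum attained at μ = ξ. -/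
open Matrix

/-- The projector onto the span of the first `k` of the vectors `u`. -/
def projK {p : ℕ} (k : ℕ) (u : Fin p → (Fin p → ℝ)) : Matrix (Fin p) (Fin p) ℝ :=
  ∑ j ∈ Finset.univ.filter (fun j : Fin p => (j : ℕ) < k), vecMulVec (u j) (u j)

section Aux

variable {p k : ℕ} {X : Type*} [Fintype X]

private lemma myortho {w : Fin p → Fin p → ℝ}
    (horth : ∀ i j, w i ⬝ᵥ w j = if i = j then (1:ℝ) else 0) (m n : Fin p) :
    ∑ j, w j m * w j n = if m = n then (1:ℝ) else 0 := by
  let U : Matrix (Fin p) (Fin p) ℝ := Matrix.of w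
  have h1 : U * Uᵀ = 1 := by
    ext i j
    simpa [U, Matrix.mul_apply, Matrix.one_apply, dotProduct] using horth i j
  have h2 : Uᵀ * U = 1 := mul_eq_one_comm.mp h1
  have h3 := congrFun (congrFun h2 m) n
  simpa [U, Matrix.mul_apply, Matrix.one_apply] using h3

private lemma myparseval {w : Fin p → Fin p → ℝ}
    (horth : ∀ i j, w i ⬝ᵥ w j = if i = j then (1:ℝ) else 0) (v v' : Fin p → ℝ) :
    ∑ j, (w j ⬝ᵥ v) * (w j ⬝ᵥ v') = v ⬝ᵥ v' := by
  have key := myortho horth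
  calc ∑ j, (w j ⬝ᵥ v) * (w j ⬝ᵥ v')
      = ∑ j, ∑ m, ∑ n, v m * v' n * (w j m * w j n) := by
        refine Finset.sum_congr rfl fun j _ => ?_
        simp only [dotProduct, Finset.sum_mul_sum]
        exact Finset.sum_congr rfl fun m _ => Finset.sum_congr rfl fun n _ => by ring
    _ = ∑ m, ∑ n, v m * v' n * ∑ j, w j m * w j n := by
        rw [Finset.sum_comm]
        refine Finset.sum_congr rfl fun m _ => ?_
        rw [Finset.sum_comm]
        exact Finset.sum_congr rfl fun n _ => (Finset.mul_sum _ _ _).symm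
    _ = v ⬝ᵥ v' := by
        simp [key, mul_ite, dotProduct]

private lemma sum_dot {ι : Type*} (s : Finset ι) (v : ι → Fin p → ℝ) (w : Fin p → ℝ) :
    (∑ j ∈ s, v j) ⬝ᵥ w = ∑ j ∈ s, v j ⬝ᵥ w := by
  simp only [dotProduct, Finset.sum_apply, Finset.sum_mul]
  exact Finset.sum_comm

private lemma dot_sum {ι : Type*} (s : Finset ι) (v : Fin p → ℝ) (w : ι → Fin p → ℝ) :
    v ⬝ᵥ (∑ j ∈ s, w j) = ∑ j ∈ s, v ⬝ᵥ w j := by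
  simp only [dotProduct, Finset.sum_apply, Finset.mul_sum]
  exact Finset.sum_comm

private lemma projK_mulVec (w : Fin p → Fin p → ℝ) (g : Fin p → ℝ) :
    (projK k w).mulVec g
      = ∑ j ∈ Finset.univ.filter (fun j : Fin p => (j : ℕ) < k), (w j ⬝ᵥ g) • w j := by
  funext m
  simp only [projK, Matrix.mulVec, dotProduct, Matrix.sum_apply, vecMulVec_apply,
    Finset.sum_mul, Finset.sum_apply, Pi.smul_apply, smul_eq_mul]
  rw [Finset.sum_comm]
  exact Finset.sum_congr rfl fun j _ => Finset.sum_congr rfl fun n _ => by ring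

private lemma projK_norm {w : Fin p → Fin p → ℝ}
    (horth : ∀ i j, w i ⬝ᵥ w j = if i = j then (1:ℝ) else 0) (g : Fin p → ℝ) :
    (projK k w).mulVec g ⬝ᵥ (projK k w).mulVec g
      = ∑ i ∈ Finset.univ.filter (fun i : Fin p => (i : ℕ) < k), (w i ⬝ᵥ g)^2 := by
  rw [projK_mulVec, sum_dot]
  refine Finset.sum_congr rfl fun i hi => ?_
  rw [smul_dotProduct, dot_sum]
  simp only [dotProduct_smul, horth, smul_ite, smul_eq_mul, mul_one, mul_zero,
    smul_zero]
  simp [mul_ite, Finset.sum_ite_eq, hi, sq]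

private lemma quad_infoM (f : X → Fin p → ℝ) (ν : X → ℝ) (v : Fin p → ℝ) :
    v ⬝ᵥ (infoM f ν).mulVec v = ∑ x, ν x * (f x ⬝ᵥ v)^2 := by
  simp only [infoM, dotProduct, Matrix.mulVec, Finset.sum_apply, Matrix.smul_apply,
    Matrix.sum_apply, vecMulVec_apply, smul_eq_mul, Finset.sum_mul, Finset.mul_sum,
    Finset.sum_mul_sum]
  calc ∑ m : Fin p, ∑ n : Fin p, ∑ x : X, v m * (ν x * (f x m * f x n) * v n)
      = ∑ m : Fin p, ∑ x : X, ∑ n : Fin p, v m * (ν x * (f x m * f x n) * v n) :=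
        Finset.sum_congr rfl fun m _ => Finset.sum_comm
    _ = ∑ x : X, ∑ m : Fin p, ∑ n : Fin p, v m * (ν x * (f x m * f x n) * v n) :=
        Finset.sum_comm
    _ = ∑ x, ν x * (f x ⬝ᵥ v)^2 := by
        refine Finset.sum_congr rfl fun x _ => ?_
        rw [dotProduct, sq, Finset.sum_mul_sum, Finset.mul_sum]
        refine Finset.sum_congr rfl fun m _ => ?_
        rw [Finset.mul_sum]
        exact Finset.sum_congr rfl fun n _ => by ring

private lemma infoM_symm (f : X → Fin p → ℝ) (ν : X → ℝ) : (infoM f ν)ᵀ = infoM f ν := by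
  ext i j
  simp only [infoM, Matrix.transpose_apply, Matrix.sum_apply, Matrix.smul_apply,
    vecMulVec_apply, smul_eq_mul]
  exact Finset.sum_congr rfl fun x _ => by ring

private lemma quad_eigen (f : X → Fin p → ℝ) (ξ : X → ℝ) (lam : Fin p → ℝ)
    {u : Fin p → Fin p → ℝ}
    (horth : ∀ i j, u i ⬝ᵥ u j = if i = j then (1:ℝ) else 0)
    (heig : ∀ i, (infoM f ξ).mulVec (u i) = lam i • u i) (v : Fin p → ℝ) :
    v ⬝ᵥ (infoM f ξ).mulVec v = ∑ j, lam j * (u j ⬝ᵥ v)^2 := by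
  have h1 : ∀ j, u j ⬝ᵥ (infoM f ξ).mulVec v = lam j * (u j ⬝ᵥ v) := by
    intro j
    rw [Matrix.dotProduct_mulVec]
    have hv : u j ᵥ* (infoM f ξ) = (infoM f ξ) *ᵥ u j := by
      conv_lhs => rw [← infoM_symm f ξ]
      exact Matrix.vecMul_transpose _ _
    rw [hv, heig j, smul_dotProduct, smul_eq_mul]
  calc v ⬝ᵥ (infoM f ξ).mulVec v
      = ∑ j, (u j ⬝ᵥ v) * (u j ⬝ᵥ (infoM f ξ).mulVec v) :=
        (myparseval horth v _).symm
    _ = ∑ j, lam j * (u j ⬝ᵥ v)^2 := by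
        refine Finset.sum_congr rfl fun j _ => ?_
        rw [h1 j]; ring

private lemma card_filter_lt (hk : k ≤ p) :
    (Finset.univ.filter (fun i : Fin p => (i : ℕ) < k)).card = k := by
  apply Finset.card_eq_of_bijective (fun i hi => ⟨i, lt_of_lt_of_le hi hk⟩)
  · intro a ha
    simp only [Finset.mem_filter, Finset.mem_univ, true_and] at ha
    exact ⟨a, ha, rfl⟩
  · intro i hi
    simp [hi]
  · intro i j hi hj h
    simpa using congrArg Fin.val h

private lemma key_ineq (hk : k ≤ p) (lam : Fin p → ℝ) (hmono : Monotone lam)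
    (t : Fin p → ℝ) (ht0 : ∀ j, 0 ≤ t j) (ht1 : ∀ j, t j ≤ 1)
    (hsum : ∑ j, t j = k) :
    ∑ j ∈ Finset.univ.filter (fun i : Fin p => (i : ℕ) < k), lam j
      ≤ ∑ j, lam j * t j := by
  rcases Nat.eq_zero_or_pos k with rfl | hkpos
  · have ht : ∀ j ∈ Finset.univ, t j = 0 :=
      (Finset.sum_eq_zero_iff_of_nonneg (fun j _ => ht0 j)).mp (by simpa using hsum)
    have : ∑ j : Fin p, lam j * t j = 0 :=
      Finset.sum_eq_zero fun j hj => by rw [ht j hj, mul_zero]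
    simp [this]
  · have hk1 : k - 1 < p := lt_of_lt_of_le (Nat.sub_lt hkpos one_pos) hk
    set c := lam ⟨k - 1, hk1⟩ with hc
    have hterm : ∀ j : Fin p,
        0 ≤ (lam j - c) * (t j - (if (j : ℕ) < k then 1 else 0)) := by
      intro j
      by_cases h : (j : ℕ) < k
      · simp only [h, if_true]
        have hle : j ≤ (⟨k - 1, hk1⟩ : Fin p) := by
          simpa [Fin.le_def] using Nat.le_sub_one_of_lt h
        nlinarith [hmono hle, ht1 j]
      · simp only [h, if_false, sub_zero]
        apply mul_nonneg _ (ht0 j)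
        have : (⟨k - 1, hk1⟩ : Fin p) ≤ j := by
          simp only [Fin.le_def]
          omega
        linarith [hmono this]
    have hnn : (0:ℝ) ≤ ∑ j, (lam j - c) * (t j - (if (j : ℕ) < k then 1 else 0)) :=
      Finset.sum_nonneg fun j _ => hterm j
    have hexp : ∑ j, (lam j - c) * (t j - (if (j : ℕ) < k then 1 else 0))
        = (∑ j, lam j * t j)
          - (∑ j ∈ Finset.univ.filter (fun i : Fin p => (i : ℕ) < k), lam j)
          - c * (∑ j, t j)
          + c * (Finset.univ.filter (fun i : Fin p => (i : ℕ) < k)).card := by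
      rw [Finset.sum_filter]
      simp only [mul_sub, sub_mul, Finset.sum_sub_distrib, Finset.mul_sum,
        Finset.card_eq_sum_ones, Nat.cast_sum, Nat.cast_one]
      rw [Finset.sum_filter]
      simp only [mul_ite, mul_one, mul_zero]
      ring_nf
    rw [hexp, hsum, card_filter_lt hk] at hnn
    linarith

private lemma sum_proj (f : X → Fin p → ℝ) (ξ : X → ℝ) {w : Fin p → Fin p → ℝ}
    (horth : ∀ i j, w i ⬝ᵥ w j = if i = j then (1:ℝ) else 0) :
    ∑ x, ((projK k w).mulVec (f x) ⬝ᵥ (projK k w).mulVec (f x)) * ξ x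
      = ∑ i ∈ Finset.univ.filter (fun i : Fin p => (i : ℕ) < k),
          w i ⬝ᵥ (infoM f ξ).mulVec (w i) := by
  simp only [projK_norm horth, Finset.sum_mul]
  rw [Finset.sum_comm]
  refine Finset.sum_congr rfl fun i _ => ?_
  rw [quad_infoM]
  refine Finset.sum_congr rfl fun x _ => ?_
  rw [dotProduct_comm]; ring

end Aux

/-- Minimax representation of the `E_k`-optimality criterion: the sum of the `k` smallest
eigenvalues of `M(ξ)` equals `min_μ Σ_x ‖P^(k)(μ) f(x)‖² ξ(x)`, the minimum being attained
at `μ = ξ`. Eigen-data (increasingly ordered eigenvalues with orthonormal eigenvectors)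
are supplied explicitly for each design. -/
theorem stmt_8 {X : Type*} [Fintype X] (p k : ℕ) (hk : k ≤ p) (f : X → (Fin p → ℝ))
    (ξ : X → ℝ) (hξ0 : ∀ x, 0 ≤ ξ x) (hξ1 : ∑ x, ξ x = 1)
    (lam : Fin p → ℝ) (u : Fin p → (Fin p → ℝ))
    (hmono : Monotone lam)
    (horth : ∀ i j, u i ⬝ᵥ u j = if i = j then (1 : ℝ) else 0)
    (heig : ∀ i, (infoM f ξ).mulVec (u i) = lam i • u i) :
    (∑ x, ((projK k u).mulVec (f x) ⬝ᵥ (projK k u).mulVec (f x)) * ξ x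
      = ∑ i ∈ Finset.univ.filter (fun i : Fin p => (i : ℕ) < k), lam i) ∧
    (∀ μ : X → ℝ, (∀ x, 0 ≤ μ x) → (∑ x, μ x = 1) →
      ∀ lamμ : Fin p → ℝ, ∀ uμ : Fin p → (Fin p → ℝ),
        Monotone lamμ →
        (∀ i j, uμ i ⬝ᵥ uμ j = if i = j then (1 : ℝ) else 0) →
        (∀ i, (infoM f μ).mulVec (uμ i) = lamμ i • uμ i) →
        (∑ i ∈ Finset.univ.filter (fun i : Fin p => (i : ℕ) < k), lam i) ≤
          ∑ x, ((projK k uμ).mulVec (f x) ⬝ᵥ (projK k uμ).mulVec (f x)) * ξ x) := by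
  constructor
  · rw [sum_proj f ξ horth]
    refine Finset.sum_congr rfl fun i _ => ?_
    rw [heig i, dotProduct_smul, horth i i]
    simp
  · intro μ hμ0 hμ1 lamμ uμ hmonoμ horthμ heigμ
    rw [sum_proj f ξ horthμ]
    set t : Fin p → ℝ :=
      fun j => ∑ i ∈ Finset.univ.filter (fun i : Fin p => (i : ℕ) < k),
        (u j ⬝ᵥ uμ i)^2 with hts
    have hRHS : ∑ i ∈ Finset.univ.filter (fun i : Fin p => (i : ℕ) < k),
        uμ i ⬝ᵥ (infoM f ξ).mulVec (uμ i) = ∑ j, lam j * t j := by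
      simp only [quad_eigen f ξ lam horth heig]
      rw [Finset.sum_comm]
      exact Finset.sum_congr rfl fun j _ => (Finset.mul_sum _ _ _).symm
    rw [hRHS]
    apply key_ineq hk lam hmono t
    · intro j
      exact Finset.sum_nonneg fun i _ => sq_nonneg _
    · intro j
      have hfull : ∑ i : Fin p, (u j ⬝ᵥ uμ i)^2 = 1 := by
        have := myparseval horthμ (u j) (u j)
        rw [horth j j] at this
        simp only [if_true] at this
        calc ∑ i : Fin p, (u j ⬝ᵥ uμ i)^2
            = ∑ i : Fin p, (uμ i ⬝ᵥ u j) * (uμ i ⬝ᵥ u j) := by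
              refine Finset.sum_congr rfl fun i _ => by rw [sq, dotProduct_comm]
          _ = 1 := this
      calc t j ≤ ∑ i : Fin p, (u j ⬝ᵥ uμ i)^2 :=
            Finset.sum_le_sum_of_subset_of_nonneg (Finset.filter_subset _ _)
              (fun i _ _ => sq_nonneg _)
        _ = 1 := hfull
    · rw [hts]
      rw [Finset.sum_comm]
      have h1 : ∀ i : Fin p, ∑ j : Fin p, (u j ⬝ᵥ uμ i)^2 = 1 := by
        intro i
        have := myparseval horth (uμ i) (uμ i)
        rw [horthμ i i] at this
        simp only [if_true] at this
        calc ∑ j : Fin p, (u j ⬝ᵥ uμ i)^2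
            = ∑ j : Fin p, (u j ⬝ᵥ uμ i) * (u j ⬝ᵥ uμ i) := by
              refine Finset.sum_congr rfl fun j _ => by rw [sq]
          _ = 1 := this
      rw [Finset.sum_congr rfl fun i _ => h1 i]
      simp [card_filter_lt hk]
end

section
/- In the linear model η(x,θ) = f(x)ᵀθ on finite 𝒳, for any ξ with M(ξ) invertible and any θ⁽⁰⁾ ∈ ℝ^p, det(M(ξ))^(1/p) equals the minimum over tuples (θ⁽¹⁾,…,θ⁽ᵖ⁾) with nonzero pairwise orthogonal differences from θ⁽⁰⁾ of [(1/p) Σᵢ ‖η(·,θ⁽ⁱ⁾)−η(·,θ⁽⁰⁾)‖²_ξ] / [∏ⱼ ‖θ⁽ʲ⁾−θ⁽⁰⁾‖²]^(1/p). -/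
open Matrix

lemma infoM_quad {X : Type*} [Fintype X] {p : ℕ} (f : X → (Fin p → ℝ)) (ξ : X → ℝ)
    (v : Fin p → ℝ) :
    v ⬝ᵥ (infoM f ξ) *ᵥ v = ∑ x, (f x ⬝ᵥ v) ^ 2 * ξ x := by
  unfold infoM
  simp only [dotProduct, mulVec, vecMulVec, Finset.sum_apply, Pi.smul_apply,
    Matrix.sum_apply, Matrix.smul_apply, of_apply, smul_eq_mul, Finset.mul_sum,
    Finset.sum_mul]
  have h1 : (∑ y, ∑ x, ∑ i : X, v y * (ξ i * (f i y * f i x) * v x))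
      = ∑ i : X, ∑ y, ∑ x, v y * (ξ i * (f i y * f i x) * v x) :=
    (Finset.sum_congr rfl fun y _ => Finset.sum_comm).trans Finset.sum_comm
  rw [h1]
  refine Finset.sum_congr rfl fun x _ => ?_
  rw [pow_two]
  simp only [Finset.sum_mul, Finset.mul_sum]
  refine Finset.sum_congr rfl fun i _ => Finset.sum_congr rfl fun j _ => by ring

lemma infoM_posSemidef {X : Type*} [Fintype X] {p : ℕ} (f : X → (Fin p → ℝ)) (ξ : X → ℝ)
    (hξ0 : ∀ x, 0 ≤ ξ x) : (infoM f ξ).PosSemidef := by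
  refine Matrix.PosSemidef.of_dotProduct_mulVec_nonneg ?_ ?_
  · refine Finset.sum_induction _ _ (fun a b => Matrix.IsHermitian.add) Matrix.isHermitian_zero ?_
    intro x _
    show _ = _
    ext i j
    simp [vecMulVec, conjTranspose_apply, mul_comm]
  · intro v
    simp only [star_trivial]
    rw [infoM_quad]
    exact Finset.sum_nonneg fun x _ => mul_nonneg (sq_nonneg _) (hξ0 x)

lemma infoM_posDef {X : Type*} [Fintype X] {p : ℕ} (f : X → (Fin p → ℝ)) (ξ : X → ℝ)
    (hξ0 : ∀ x, 0 ≤ ξ x) (h : IsUnit (infoM f ξ).det) : (infoM f ξ).PosDef := by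
  have hpsd := infoM_posSemidef f ξ hξ0
  refine Matrix.PosDef.of_dotProduct_mulVec_pos hpsd.1 fun x hx => ?_
  have h1 : 0 ≤ star x ⬝ᵥ (infoM f ξ) *ᵥ x := hpsd.dotProduct_mulVec_nonneg x
  rcases h1.lt_or_eq with h2 | h2
  · exact h2
  · exfalso
    have h3 : (infoM f ξ) *ᵥ x = 0 := (hpsd.dotProduct_mulVec_zero_iff x).mp h2.symm
    have hinj : Function.Injective ((infoM f ξ).mulVec) :=
      (Matrix.mulVec_injective_iff_isUnit).mpr ((Matrix.isUnit_iff_isUnit_det _).mpr h)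
    exact hx (hinj (by simpa using h3))

lemma trace_eq_sum_eigs {p : ℕ} {A : Matrix (Fin p) (Fin p) ℝ} (hA : A.IsHermitian) :
    A.trace = ∑ i, hA.eigenvalues i := by
  simp [hA.trace_eq_sum_eigenvalues]

lemma hadamard_psd {p : ℕ} (hp : 0 < p) {B : Matrix (Fin p) (Fin p) ℝ} (hB : B.PosSemidef)
    (hd : ∀ i, 0 < B i i) : B.det ≤ ∏ i, B i i := by
  set e : Fin p → ℝ := fun i => (Real.sqrt (B i i))⁻¹ with he_def
  have he : ∀ i, 0 < e i := fun i => inv_pos.2 (Real.sqrt_pos.2 (hd i))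
  set E : Matrix (Fin p) (Fin p) ℝ := diagonal e with hE_def
  have hEH : Eᴴ = E := by
    rw [hE_def, diagonal_conjTranspose]
    congr
  have hC : (E * B * E).PosSemidef := by
    have := hB.conjTranspose_mul_mul_same E
    rwa [hEH] at this
  set C := E * B * E with hC_def
  have hCdiag : ∀ i, C i i = 1 := by
    intro i
    rw [hC_def, Matrix.mul_apply]
    simp only [hE_def, mul_diagonal, diagonal_mul]
    rw [Finset.sum_eq_single i]
    · have hs : Real.sqrt (B i i) ≠ 0 := (Real.sqrt_pos.2 (hd i)).ne'
      rw [he_def]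
      simp only [Matrix.diagonal_apply_eq]
      rw [show B i i = Real.sqrt (B i i) * Real.sqrt (B i i) from
        (Real.mul_self_sqrt (hd i).le).symm]
      field_simp
      rw [Real.sqrt_sq (Real.sqrt_nonneg _)]
    · intro b _ hb
      rw [Matrix.diagonal_apply_ne e hb]
      ring
    · simp
  have htr : C.trace = p := by
    rw [Matrix.trace]
    simp only [diag_apply, hCdiag]
    simp
  set μ := hC.1.eigenvalues with hμ
  have hμ0 : ∀ i, 0 ≤ μ i := hC.eigenvalues_nonneg
  have hsum : ∑ i, μ i = p := by rw [← trace_eq_sum_eigs hC.1, htr]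
  have hamgm : ∏ i, μ i ^ ((1:ℝ)/p) ≤ ∑ i, (1/(p:ℝ)) * μ i :=
    Real.geom_mean_le_arith_mean_weighted Finset.univ (fun _ => 1/(p:ℝ)) μ
      (fun i _ => by positivity) (by
        simp [Finset.sum_const, Finset.card_univ]
        field_simp) (fun i _ => hμ0 i)
  have hle1 : ∏ i, μ i ≤ 1 := by
    have h1 : ∑ i, (1/(p:ℝ)) * μ i = 1 := by
      rw [← Finset.mul_sum, hsum]
      field_simp
    have h2 : (∏ i, μ i ^ ((1:ℝ)/p)) ^ (p:ℕ) = ∏ i, μ i := by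
      rw [← Finset.prod_pow]
      refine Finset.prod_congr rfl fun i _ => ?_
      rw [← Real.rpow_natCast (μ i ^ ((1:ℝ)/p)), ← Real.rpow_mul (hμ0 i)]
      rw [one_div, inv_mul_cancel₀ (by exact_mod_cast hp.ne'), Real.rpow_one]
    calc ∏ i, μ i = (∏ i, μ i ^ ((1:ℝ)/p)) ^ (p:ℕ) := h2.symm
      _ ≤ 1 ^ (p:ℕ) := by
          refine pow_le_pow_left₀ (Finset.prod_nonneg fun i _ => Real.rpow_nonneg (hμ0 i) _) ?_ _
          exact hamgm.trans (le_of_eq h1)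
      _ = 1 := one_pow _
  have hdetC : C.det = ∏ i, μ i := by
    rw [hC.1.det_eq_prod_eigenvalues]; norm_num; rfl
  have hdetC' : C.det = B.det * ∏ i, (B i i)⁻¹ := by
    rw [hC_def, Matrix.det_mul, Matrix.det_mul, hE_def, det_diagonal]
    have : ∏ i, e i = ∏ i, (Real.sqrt (B i i))⁻¹ := rfl
    rw [this]
    rw [mul_comm (∏ i, (Real.sqrt (B i i))⁻¹) B.det, mul_assoc, ← Finset.prod_mul_distrib]
    congr 1
    refine Finset.prod_congr rfl fun i _ => ?_
    rw [← mul_inv, Real.mul_self_sqrt (hd i).le]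
  have hprodpos : 0 < ∏ i, B i i := Finset.prod_pos fun i _ => hd i
  have : B.det * (∏ i, B i i)⁻¹ ≤ 1 := by
    rw [← Finset.prod_inv_distrib, ← hdetC', hdetC]
    exact hle1
  calc B.det = B.det * (∏ i, B i i)⁻¹ * ∏ i, B i i := by field_simp
    _ ≤ 1 * ∏ i, B i i := mul_le_mul_of_nonneg_right this hprodpos.le
    _ = ∏ i, B i i := one_mul _

/-- Extended `D` criterion in the linear model `η(x,θ) = f(x)ᵀθ`: `det(M(ξ))^(1/p)` is
the minimum over tuples `(θ⁽¹⁾,…,θ⁽ᵖ⁾)` with nonzero pairwise orthogonal differences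
`θ⁽ⁱ⁾−θ⁽⁰⁾` of `[(1/p) Σᵢ ‖η(·,θ⁽ⁱ⁾)−η(·,θ⁽⁰⁾)‖²_ξ] / [∏ⱼ ‖θ⁽ʲ⁾−θ⁽⁰⁾‖²]^(1/p)`. -/
theorem stmt_17 {X : Type*} [Fintype X] (p : ℕ) (hp : 0 < p)
    (f : X → (Fin p → ℝ))
    (ξ : X → ℝ) (hξ0 : ∀ x, 0 ≤ ξ x) (hξ1 : ∑ x, ξ x = 1)
    (hξinv : IsUnit (infoM f ξ).det)
    (θ0 : Fin p → ℝ) :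
    IsLeast {t : ℝ | ∃ θ : Fin p → (Fin p → ℝ),
        (∀ i, θ i - θ0 ≠ 0) ∧
        (∀ i j, i ≠ j → (θ i - θ0) ⬝ᵥ (θ j - θ0) = 0) ∧
        t = ((1 / (p : ℝ)) * ∑ i, ∑ x, ((f x ⬝ᵥ θ i) - (f x ⬝ᵥ θ0)) ^ 2 * ξ x) /
          (∏ j, (θ j - θ0) ⬝ᵥ (θ j - θ0)) ^ ((1 : ℝ) / p)}
      ((infoM f ξ).det ^ ((1 : ℝ) / p)) := by
  set M := infoM f ξ with hM_def
  have hpd : M.PosDef := infoM_posDef f ξ hξ0 hξinv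
  have hdet : 0 < M.det := hpd.det_pos
  have hH : M.IsHermitian := hpd.1
  -- the quadratic form identity for the numerator summands
  have hnum : ∀ θi : Fin p → ℝ, ∑ x, ((f x ⬝ᵥ θi) - (f x ⬝ᵥ θ0)) ^ 2 * ξ x
      = (θi - θ0) ⬝ᵥ M *ᵥ (θi - θ0) := by
    intro θi
    rw [infoM_quad]
    refine Finset.sum_congr rfl fun x _ => ?_
    rw [dotProduct_sub]
  constructor
  · -- membership: eigenvector witness
    set b := hH.eigenvectorBasis with hb_def
    set μ := hH.eigenvalues with hμ_def
    have hμpos : ∀ i, 0 < μ i := hpd.eigenvalues_pos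
    set c : Fin p → ℝ := fun i => (Real.sqrt (μ i))⁻¹ with hc_def
    have hc : ∀ i, 0 < c i := fun i => inv_pos.2 (Real.sqrt_pos.2 (hμpos i))
    set u : Fin p → (Fin p → ℝ) := fun i => ⇑(b i) with hu_def
    have hdotinner : ∀ i j, u i ⬝ᵥ u j = (inner ℝ (b i) (b j) : ℝ) := fun i j => by
      simp only [u, dotProduct, PiLp.inner_apply, RCLike.inner_apply, conj_trivial]
      exact Finset.sum_congr rfl fun k _ => by ring
    have huu : ∀ i, u i ⬝ᵥ u i = 1 := by
      intro i
      rw [hdotinner, real_inner_self_eq_norm_sq, hH.eigenvectorBasis.orthonormal.1 i]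
      norm_num
    have huij : ∀ i j, i ≠ j → u i ⬝ᵥ u j = 0 := by
      intro i j hij
      rw [hdotinner]
      exact hH.eigenvectorBasis.orthonormal.2 hij
    have hune : ∀ i, u i ≠ 0 := by
      intro i h
      have := huu i
      rw [h] at this
      simp at this
    refine ⟨fun i => θ0 + c i • u i, ?_, ?_, ?_⟩
    · intro i
      rw [add_sub_cancel_left]
      exact smul_ne_zero (hc i).ne' (hune i)
    · intro i j hij
      rw [add_sub_cancel_left, add_sub_cancel_left]
      simp only [smul_dotProduct, dotProduct_smul, smul_eq_mul]
      rw [huij i j hij]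
      ring
    · -- value equals det^(1/p)
      have hMu : ∀ i, M *ᵥ u i = μ i • u i := fun i => hH.mulVec_eigenvectorBasis i
      have hq1 : ∀ i, ∑ x, ((f x ⬝ᵥ (θ0 + c i • u i)) - (f x ⬝ᵥ θ0)) ^ 2 * ξ x = 1 := by
        intro i
        rw [hnum, add_sub_cancel_left, mulVec_smul, hMu i]
        simp only [smul_dotProduct, dotProduct_smul, smul_eq_mul]
        rw [huu i]
        rw [hc_def]
        have hs : Real.sqrt (μ i) ≠ 0 := (Real.sqrt_pos.2 (hμpos i)).ne'
        rw [show μ i = Real.sqrt (μ i) * Real.sqrt (μ i) from (Real.mul_self_sqrt (hμpos i).le).symm]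
        field_simp
      have hden : ∏ j, ((θ0 + c j • u j) - θ0) ⬝ᵥ ((θ0 + c j • u j) - θ0) = (M.det)⁻¹ := by
        have : ∀ j, ((θ0 + c j • u j) - θ0) ⬝ᵥ ((θ0 + c j • u j) - θ0) = (μ j)⁻¹ := by
          intro j
          rw [add_sub_cancel_left]
          simp only [smul_dotProduct, dotProduct_smul, smul_eq_mul]
          rw [huu j, hc_def]
          rw [show μ j = Real.sqrt (μ j) * Real.sqrt (μ j) from
            (Real.mul_self_sqrt (hμpos j).le).symm]
          rw [mul_one, ← mul_inv]
        rw [Finset.prod_congr rfl fun j _ => this j, Finset.prod_inv_distrib]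
        congr 1
        rw [hH.det_eq_prod_eigenvalues]
        norm_num
        rfl
      rw [hden]
      rw [Finset.sum_congr rfl fun i _ => hq1 i]
      simp only [Finset.sum_const, Finset.card_univ, Fintype.card_fin, nsmul_eq_mul, mul_one]
      rw [one_div, inv_mul_cancel₀ (by exact_mod_cast hp.ne' : (p:ℝ) ≠ 0)]
      rw [Real.inv_rpow hdet.le, one_div, inv_inv]
  · -- lower bound
    rintro t ⟨θ, hne, horth, rfl⟩
    set v : Fin p → (Fin p → ℝ) := fun i => θ i - θ0 with hv_def
    set a : Fin p → ℝ := fun i => v i ⬝ᵥ v i with ha_def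
    set q : Fin p → ℝ := fun i => v i ⬝ᵥ M *ᵥ v i with hq_def
    have ha : ∀ i, 0 < a i := by
      intro i
      have h1 : a i ≠ 0 := fun h => hne i (dotProduct_self_eq_zero.mp h)
      have h2 : 0 ≤ a i := Finset.sum_nonneg fun k _ => mul_self_nonneg _
      exact h2.lt_of_ne' h1
    have hq : ∀ i, 0 < q i := by
      intro i
      have := hpd.dotProduct_mulVec_pos (hne i)
      simpa only [star_trivial] using this
    -- the Gram-type matrix
    set W : Matrix (Fin p) (Fin p) ℝ := (Matrix.of v)ᵀ with hW_def
    have hWH : Wᴴ = Wᵀ := Matrix.conjTranspose_eq_transpose_of_trivial W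
    set B := Wᵀ * M * W with hB_def
    have hBij : ∀ i j, B i j = v i ⬝ᵥ M *ᵥ v j := by
      intro i j
      rw [hB_def, Matrix.mul_apply]
      simp only [Matrix.mul_apply, Matrix.transpose_apply, Matrix.of_apply, hW_def,
        mulVec, dotProduct, Finset.mul_sum]
      simp only [Finset.sum_mul]
      rw [Finset.sum_comm]
      exact Finset.sum_congr rfl fun k _ => Finset.sum_congr rfl fun l _ => by ring
    have hB : B.PosSemidef := by
      have := hpd.posSemidef.conjTranspose_mul_mul_same W
      rwa [hWH] at this
    have hWW : Wᵀ * W = diagonal a := by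
      ext i j
      rw [Matrix.mul_apply]
      by_cases hij : i = j
      · subst hij
        rw [Matrix.diagonal_apply_eq]
        rfl
      · rw [Matrix.diagonal_apply_ne _ hij]
        exact horth i j hij
    have hdetB : B.det = M.det * ∏ i, a i := by
      rw [hB_def, Matrix.det_mul, Matrix.det_mul, Matrix.det_transpose]
      have h1 : W.det * W.det = ∏ i, a i := by
        have h2 : (Wᵀ * W).det = Wᵀ.det * W.det := Matrix.det_mul _ _
        rw [hWW, Matrix.det_diagonal, Matrix.det_transpose] at h2
        exact h2.symm
      rw [mul_comm W.det M.det, mul_assoc, h1]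
    have hHada : M.det * ∏ i, a i ≤ ∏ i, q i := by
      have h0 := hadamard_psd hp hB (fun i => by rw [hBij]; exact hq i)
      rw [hdetB] at h0
      calc M.det * ∏ i, a i ≤ ∏ i, B i i := h0
        _ = ∏ i, q i := Finset.prod_congr rfl fun i _ => hBij i i
    have hQpos : 0 < ∏ i, q i := Finset.prod_pos fun i _ => hq i
    have hApos : 0 < ∏ i, a i := Finset.prod_pos fun i _ => ha i
    have hMQ : M.det ≤ (∏ i, q i) / (∏ i, a i) := (le_div_iff₀ hApos).2 hHada
    -- AM-GM on the q's
    have hamgm : (∏ i, q i) ^ ((1:ℝ)/p) ≤ (1/(p:ℝ)) * ∑ i, q i := by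
      have h1 := Real.geom_mean_le_arith_mean_weighted Finset.univ (fun _ => 1/(p:ℝ)) q
        (fun i _ => by positivity) (by
          simp [Finset.sum_const, Finset.card_univ]
          field_simp) (fun i _ => (hq i).le)
      rw [Real.finset_prod_rpow Finset.univ q (fun i _ => (hq i).le) ((1:ℝ)/p)] at h1
      rw [Finset.mul_sum]
      exact h1
    have hsumq : (1 / (p : ℝ)) * ∑ i, ∑ x, ((f x ⬝ᵥ θ i) - (f x ⬝ᵥ θ0)) ^ 2 * ξ x
        = (1/(p:ℝ)) * ∑ i, q i := by
      congr 1
      exact Finset.sum_congr rfl fun i _ => hnum (θ i)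
    rw [hsumq]
    calc M.det ^ ((1:ℝ)/p) ≤ ((∏ i, q i) / (∏ i, a i)) ^ ((1:ℝ)/p) :=
          Real.rpow_le_rpow hdet.le hMQ (by positivity)
      _ = (∏ i, q i) ^ ((1:ℝ)/p) / (∏ i, a i) ^ ((1:ℝ)/p) :=
          Real.div_rpow hQpos.le hApos.le _
      _ ≤ ((1/(p:ℝ)) * ∑ i, q i) / (∏ i, a i) ^ ((1:ℝ)/p) := by
          have hpos : (0:ℝ) < (∏ i, a i) ^ ((1:ℝ)/p) := Real.rpow_pos_of_pos hApos _
          gcongr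
end
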